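/- Fix a prime ℓ, a positive integer a, and an integer k coprime to ℓ. The number of matrices M ∈ GL₂(ℤ/ℓᵃℤ) with det(M−I) ≢ 0 (mod ℓ) and det M ≡ k (mod ℓᵃ) equals ℓ^{3(a−1)}·(ℓ³−ℓ²−ℓ) if k ≡ 1 (mod ℓ), and ℓ^{3(a−1)}·(ℓ³−ℓ²−2ℓ) if k ≢ 1 (mod ℓ). -/
import Mathlib

open Finset

namespace Stmt4Aux

/-- generic: pairs multiplying to a unit, in a finite comm monoid. -/
lemma card_pairs_mul_eq_unit {S : Type*} [CommMonoid S] [Fintype S] [DecidableEq S] (u : Sˣ) :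
    (univ.filter fun v : S × S => v.1 * v.2 = ↑u).card = Fintype.card Sˣ := by
  rw [← Fintype.card_subtype]
  refine (Fintype.card_congr (Equiv.ofBijective
    (fun w : Sˣ => (⟨(↑w, ↑w⁻¹ * ↑u), by simp [← mul_assoc]⟩ : {v : S × S // v.1 * v.2 = ↑u}))
    ⟨?_, ?_⟩)).symm
  · intro w w' h
    have : (w : S) = w' := congrArg (fun z => z.1.1) h
    exact Units.ext this
  · rintro ⟨⟨q, r⟩, h⟩
    simp only at h
    have h1 : q * (r * ↑u⁻¹) = 1 := by
      rw [← mul_assoc, h]; exact u.mul_inv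
    have h2 : (r * ↑u⁻¹) * q = 1 := by rw [mul_comm]; exact h1
    refine ⟨⟨q, r * ↑u⁻¹, h1, h2⟩, Subtype.ext ?_⟩
    dsimp only
    have hinv : (((⟨q, r * ↑u⁻¹, h1, h2⟩ : Sˣ)⁻¹ : Sˣ) : S) = r * ↑u⁻¹ := rfl
    rw [Prod.mk.injEq]
    exact ⟨rfl, by rw [hinv, mul_assoc, u.inv_mul, mul_one]⟩

end Stmt4Aux

namespace Stmt4Aux

variable {ℓ a : ℕ}

/-- reduction map. -/
def pr (ha : 1 ≤ a) : ZMod (ℓ ^ a) →+* ZMod ℓ :=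
  ZMod.castHom (dvd_pow_self ℓ (Nat.one_le_iff_ne_zero.mp ha)) (ZMod ℓ)

lemma pr_natCast (ha : 1 ≤ a) (m : ℕ) : pr (ℓ := ℓ) ha (m : ZMod (ℓ ^ a)) = (m : ZMod ℓ) :=
  map_natCast _ m

lemma card_fiber (hℓ : ℓ.Prime) (ha : 1 ≤ a) [NeZero ℓ] [NeZero (ℓ ^ a)] (c : ZMod ℓ) :
    (univ.filter fun x : ZMod (ℓ ^ a) => pr ha x = c).card = ℓ ^ (a - 1) := by
  have key : ∀ c : ZMod ℓ, (univ.filter fun x : ZMod (ℓ ^ a) => pr ha x = c).card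
      = (univ.filter fun x : ZMod (ℓ ^ a) => pr ha x = 0).card := by
    intro c
    apply Finset.card_bij' (fun x _ => x - (c.val : ZMod (ℓ ^ a)))
      (fun x _ => x + (c.val : ZMod (ℓ ^ a)))
    · intro x hx
      simp only [mem_filter, mem_univ, true_and] at hx ⊢
      rw [map_sub, hx, pr_natCast, ZMod.natCast_val, ZMod.cast_id, sub_self]
    · intro x hx
      simp only [mem_filter, mem_univ, true_and] at hx ⊢
      rw [map_add, hx, pr_natCast, ZMod.natCast_val, ZMod.cast_id, zero_add]
    · intro x _; ring
    · intro x _; ring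
  have tot : ∑ c : ZMod ℓ, (univ.filter fun x : ZMod (ℓ ^ a) => pr ha x = c).card = ℓ ^ a := by
    rw [← Finset.card_eq_sum_card_fiberwise (fun x _ => mem_univ (pr ha x))]
    simp [ZMod.card]
  have tot2 : ℓ * (univ.filter fun x : ZMod (ℓ ^ a) => pr ha x = 0).card = ℓ ^ a := by
    have h1 : ∑ c : ZMod ℓ, (univ.filter fun x : ZMod (ℓ ^ a) => pr ha x = c).card
        = ℓ * (univ.filter fun x : ZMod (ℓ ^ a) => pr ha x = 0).card := by
      rw [Finset.sum_congr rfl (fun c _ => key c), Finset.sum_const, Finset.card_univ, ZMod.card, smul_eq_mul]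
    exact h1.symm.trans tot
  have h2 : ℓ ^ a = ℓ * ℓ ^ (a - 1) := by
    conv_lhs => rw [show a = 1 + (a - 1) by omega]
    rw [pow_add, pow_one]
  rw [key c]
  exact Nat.eq_of_mul_eq_mul_left hℓ.pos (tot2.trans h2)


lemma card_single_pr (hℓ : ℓ.Prime) (ha : 1 ≤ a) [NeZero ℓ] [NeZero (ℓ ^ a)]
    (Q : ZMod ℓ → Prop) [DecidablePred Q] :
    (univ.filter fun x : ZMod (ℓ ^ a) => Q (pr ha x)).card
      = ℓ ^ (a - 1) * (univ.filter Q).card := by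
  rw [Finset.card_eq_sum_card_fiberwise (f := fun x : ZMod (ℓ ^ a) => pr ha x)
    (t := univ.filter Q) (fun x hx => by simpa using (Finset.mem_filter.mp hx).2)]
  rw [Finset.sum_congr rfl (fun b hb => ?_), Finset.sum_const, smul_eq_mul, mul_comm]
  have hQb : Q b := (Finset.mem_filter.mp hb).2
  have : ((univ.filter fun x : ZMod (ℓ ^ a) => Q (pr ha x)).filter
      fun x => pr ha x = b) = univ.filter fun x : ZMod (ℓ ^ a) => pr ha x = b := by
    ext x
    simp only [Finset.mem_filter, mem_univ, true_and]
    constructor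
    · rintro ⟨_, h⟩; exact h
    · intro h; exact ⟨by rw [h]; exact hQb, h⟩
  rw [this, card_fiber hℓ ha]

lemma card_pair_pr (hℓ : ℓ.Prime) (ha : 1 ≤ a) [NeZero ℓ] [NeZero (ℓ ^ a)]
    (Q : ZMod ℓ × ZMod ℓ → Prop) [DecidablePred Q] :
    (univ.filter fun v : ZMod (ℓ ^ a) × ZMod (ℓ ^ a) => Q (pr ha v.1, pr ha v.2)).card
      = ℓ ^ (a - 1) * ℓ ^ (a - 1) * (univ.filter Q).card := by
  rw [Finset.card_eq_sum_card_fiberwise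
    (f := fun v : ZMod (ℓ ^ a) × ZMod (ℓ ^ a) => (pr ha v.1, pr ha v.2))
    (t := univ.filter Q) (fun x hx => by simpa using (Finset.mem_filter.mp hx).2)]
  rw [Finset.sum_congr rfl (fun b hb => ?_), Finset.sum_const, smul_eq_mul, mul_comm]
  have hQb : Q b := (Finset.mem_filter.mp hb).2
  have h1 : ((univ.filter fun v : ZMod (ℓ ^ a) × ZMod (ℓ ^ a) => Q (pr ha v.1, pr ha v.2)).filter
      fun v => (pr ha v.1, pr ha v.2) = b)
      = (univ.filter fun x : ZMod (ℓ ^ a) => pr ha x = b.1) ×ˢ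
        (univ.filter fun x : ZMod (ℓ ^ a) => pr ha x = b.2) := by
    ext v
    simp only [Finset.mem_filter, mem_univ, true_and, Finset.mem_product, Prod.ext_iff]
    constructor
    · rintro ⟨_, h1, h2⟩; exact ⟨h1, h2⟩
    · rintro ⟨h1, h2⟩
      exact ⟨by rw [h1, h2]; simpa using hQb, h1, h2⟩
  rw [h1, Finset.card_product, card_fiber hℓ ha, card_fiber hℓ ha]


lemma card_F_units (hℓ : ℓ.Prime) [NeZero ℓ] : Fintype.card (ZMod ℓ)ˣ = ℓ - 1 := by
  rw [ZMod.card_units_eq_totient, Nat.totient_prime hℓ]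

lemma card_R_units (hℓ : ℓ.Prime) (ha : 1 ≤ a) [NeZero (ℓ ^ a)] :
    Fintype.card (ZMod (ℓ ^ a))ˣ = ℓ ^ (a - 1) * (ℓ - 1) := by
  rw [ZMod.card_units_eq_totient, Nat.totient_prime_pow hℓ (by omega : 0 < a)]

lemma card_F_mul_ne (hℓ : ℓ.Prime) [NeZero ℓ] {c : ZMod ℓ} (hc : c ≠ 0) :
    (univ.filter fun w : ZMod ℓ × ZMod ℓ => w.1 * w.2 = c).card = ℓ - 1 := by
  haveI : Fact ℓ.Prime := ⟨hℓ⟩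
  have hu : IsUnit c := hc.isUnit
  have := card_pairs_mul_eq_unit hu.unit
  rw [hu.unit_spec] at this
  rw [this, card_F_units hℓ]

lemma card_F_mul_zero (hℓ : ℓ.Prime) [NeZero ℓ] :
    (univ.filter fun w : ZMod ℓ × ZMod ℓ => w.1 * w.2 = 0).card + 1 = 2 * ℓ := by
  haveI : Fact ℓ.Prime := ⟨hℓ⟩
  have h1 : (univ.filter fun w : ZMod ℓ × ZMod ℓ => w.1 * w.2 = 0)
      = (univ.filter fun w : ZMod ℓ × ZMod ℓ => w.1 = 0) ∪
        (univ.filter fun w : ZMod ℓ × ZMod ℓ => w.2 = 0) := by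
    ext w
    simp [mul_eq_zero, Finset.mem_union, ← Finset.filter_or]
  have h2 : (univ.filter fun w : ZMod ℓ × ZMod ℓ => w.1 = 0)
      = {(0 : ZMod ℓ)} ×ˢ (univ : Finset (ZMod ℓ)) := by
    ext w; simp [Finset.mem_product, eq_comm, Prod.ext_iff]
  have h3 : (univ.filter fun w : ZMod ℓ × ZMod ℓ => w.2 = 0)
      = (univ : Finset (ZMod ℓ)) ×ˢ {(0 : ZMod ℓ)} := by
    ext w; simp [Finset.mem_product, eq_comm, Prod.ext_iff]
  have h4 : ((univ.filter fun w : ZMod ℓ × ZMod ℓ => w.1 = 0) ∩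
      (univ.filter fun w : ZMod ℓ × ZMod ℓ => w.2 = 0)) = {((0 : ZMod ℓ), (0 : ZMod ℓ))} := by
    ext w
    simp only [Finset.mem_inter, Finset.mem_filter, mem_univ, true_and, Finset.mem_singleton,
      Prod.ext_iff]
  have := Finset.card_union_add_card_inter
    (univ.filter fun w : ZMod ℓ × ZMod ℓ => w.1 = 0)
    (univ.filter fun w : ZMod ℓ × ZMod ℓ => w.2 = 0)
  rw [h4, Finset.card_singleton] at this
  rw [h1, this, h2, h3, Finset.card_product, Finset.card_product, Finset.card_singleton,
    Finset.card_univ, ZMod.card]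
  omega


lemma isUnit_iff_pr (hℓ : ℓ.Prime) (ha : 1 ≤ a) [NeZero ℓ] [NeZero (ℓ ^ a)]
    (x : ZMod (ℓ ^ a)) : IsUnit x ↔ pr ha x ≠ 0 := by
  have h1 : IsUnit x ↔ IsUnit ((x.val : ZMod (ℓ ^ a))) := by rw [ZMod.natCast_zmod_val]
  rw [h1, ZMod.isUnit_iff_coprime,
    Nat.coprime_pow_right_iff (by omega : 0 < a)]
  have h2 : pr (ℓ := ℓ) ha x = ((x.val : ℕ) : ZMod ℓ) := by
    rw [pr, ZMod.castHom_apply, ← ZMod.natCast_val]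
  rw [h2, Ne, ZMod.natCast_eq_zero_iff, Nat.coprime_comm]
  exact Nat.Prime.coprime_iff_not_dvd hℓ

lemma card_pairs_R_eq (hℓ : ℓ.Prime) (ha : 1 ≤ a) [NeZero ℓ] [NeZero (ℓ ^ a)]
    {c : ZMod (ℓ ^ a)} (hc : pr ha c ≠ 0) :
    (univ.filter fun v : ZMod (ℓ ^ a) × ZMod (ℓ ^ a) => v.1 * v.2 = c).card
      = ℓ ^ (a - 1) * (ℓ - 1) := by
  have hu : IsUnit c := (isUnit_iff_pr hℓ ha c).mpr hc
  have := card_pairs_mul_eq_unit hu.unit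
  rw [hu.unit_spec] at this
  rw [this, card_R_units hℓ ha]


lemma inner_nonunit (hℓ : ℓ.Prime) (ha : 1 ≤ a) [NeZero ℓ] [NeZero (ℓ ^ a)] (k : ℤ)
    (hkF : (k : ZMod ℓ) ≠ 0) (p : ZMod (ℓ ^ a)) (hp : pr ha p = 0) :
    ∑ q : ZMod (ℓ ^ a), ∑ r : ZMod (ℓ ^ a), ∑ s : ZMod (ℓ ^ a),
      (if p * s - q * r = (k : ZMod (ℓ ^ a)) ∧ pr ha p + pr ha s ≠ (k : ZMod ℓ) + 1
        then 1 else 0)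
      = (ℓ ^ (a - 1) * (ℓ - 1)) * (ℓ ^ (a - 1) * (ℓ - 1)) := by
  have step1 : ∀ q : ZMod (ℓ ^ a), ∑ r : ZMod (ℓ ^ a), ∑ s : ZMod (ℓ ^ a),
      (if p * s - q * r = (k : ZMod (ℓ ^ a)) ∧ pr ha p + pr ha s ≠ (k : ZMod ℓ) + 1
        then 1 else 0)
      = ∑ s : ZMod (ℓ ^ a), ∑ r : ZMod (ℓ ^ a),
      (if p * s - q * r = (k : ZMod (ℓ ^ a)) ∧ pr ha p + pr ha s ≠ (k : ZMod ℓ) + 1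
        then 1 else 0) := fun q => Finset.sum_comm
  rw [Finset.sum_congr rfl (fun q _ => step1 q), Finset.sum_comm]
  have step2 : ∀ s : ZMod (ℓ ^ a), ∑ q : ZMod (ℓ ^ a), ∑ r : ZMod (ℓ ^ a),
      (if p * s - q * r = (k : ZMod (ℓ ^ a)) ∧ pr ha p + pr ha s ≠ (k : ZMod ℓ) + 1
        then 1 else 0)
      = if pr ha s ≠ (k : ZMod ℓ) + 1 then ℓ ^ (a - 1) * (ℓ - 1) else 0 := by
    intro s
    by_cases hs : pr ha s = (k : ZMod ℓ) + 1
    · simp [hs, hp]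
    · rw [if_pos hs]
      have hcond : ∀ q r : ZMod (ℓ ^ a),
          (p * s - q * r = (k : ZMod (ℓ ^ a)) ∧ pr ha p + pr ha s ≠ (k : ZMod ℓ) + 1)
          ↔ q * r = p * s - (k : ZMod (ℓ ^ a)) := by
        intro q r
        rw [hp, zero_add]
        constructor
        · rintro ⟨h1, _⟩; linear_combination -h1
        · intro h; exact ⟨by linear_combination -h, hs⟩
      simp only [hcond]
      have hpair : (∑ q : ZMod (ℓ ^ a), ∑ r : ZMod (ℓ ^ a),
          if q * r = p * s - (k : ZMod (ℓ ^ a)) then 1 else 0)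
          = (univ.filter fun v : ZMod (ℓ ^ a) × ZMod (ℓ ^ a) =>
              v.1 * v.2 = p * s - (k : ZMod (ℓ ^ a))).card := by
        rw [Finset.card_filter, Fintype.sum_prod_type]
      rw [hpair]
      apply card_pairs_R_eq hℓ ha
      rw [map_sub, map_mul, hp, zero_mul, zero_sub, map_intCast, neg_ne_zero]
      exact hkF
  rw [Finset.sum_congr rfl (fun s _ => step2 s), ← Finset.sum_filter, Finset.sum_const,
    smul_eq_mul]
  congr 1
  rw [card_single_pr hℓ ha (fun x => x ≠ (k : ZMod ℓ) + 1), Finset.filter_ne',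
    Finset.card_erase_of_mem (mem_univ _), Finset.card_univ, ZMod.card]


lemma inner_unit (hℓ : ℓ.Prime) (ha : 1 ≤ a) [NeZero ℓ] [NeZero (ℓ ^ a)] (k : ℤ)
    (p : ZMod (ℓ ^ a)) (hp : pr ha p ≠ 0) :
    ∑ q : ZMod (ℓ ^ a), ∑ r : ZMod (ℓ ^ a), ∑ s : ZMod (ℓ ^ a),
      (if p * s - q * r = (k : ZMod (ℓ ^ a)) ∧ pr ha p + pr ha s ≠ (k : ZMod ℓ) + 1
        then 1 else 0)
      = ℓ ^ (a - 1) * ℓ ^ (a - 1) * (univ.filter fun w : ZMod ℓ × ZMod ℓ =>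
          w.1 * w.2 ≠ ((k : ZMod ℓ) + 1) * pr ha p - pr ha p * pr ha p - (k : ZMod ℓ)).card := by
  have hu : IsUnit p := (isUnit_iff_pr hℓ ha p).mpr hp
  have hup : (↑hu.unit : ZMod (ℓ ^ a)) = p := hu.unit_spec
  set u := hu.unit with hu_def
  have hxy : pr ha p * pr ha (↑u⁻¹ : ZMod (ℓ ^ a)) = 1 := by
    rw [← map_mul, ← hup, ← Units.val_mul, mul_inv_cancel, Units.val_one, map_one]
  have key : ∀ t : ZMod ℓ,
      (pr ha p + pr ha (↑u⁻¹ : ZMod (ℓ ^ a)) * ((k : ZMod ℓ) + t) = (k : ZMod ℓ) + 1)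
      ↔ t = ((k : ZMod ℓ) + 1) * pr ha p - pr ha p * pr ha p - (k : ZMod ℓ) := by
    intro t
    constructor
    · intro h
      linear_combination pr ha p * h - ((k : ZMod ℓ) + t) * hxy
    · intro h
      linear_combination pr ha (↑u⁻¹ : ZMod (ℓ ^ a)) * h +
        ((k : ZMod ℓ) + 1 - pr ha p) * hxy
  have hiff : ∀ q r s : ZMod (ℓ ^ a),
      (p * s - q * r = (k : ZMod (ℓ ^ a)))
      ↔ s = (↑u⁻¹ : ZMod (ℓ ^ a)) * ((k : ZMod (ℓ ^ a)) + q * r) := by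
    intro q r s
    constructor
    · intro h
      have h2 : (↑u⁻¹ : ZMod (ℓ ^ a)) * (p * s) = s := by
        rw [← hup, ← mul_assoc, ← Units.val_mul, inv_mul_cancel, Units.val_one, one_mul]
      rw [← h2]
      congr 1
      linear_combination h
    · intro h
      rw [h, ← hup, ← mul_assoc, ← Units.val_mul, mul_inv_cancel, Units.val_one, one_mul,
        add_sub_cancel_right]
  have step1 : ∀ q r : ZMod (ℓ ^ a),
      (∑ s : ZMod (ℓ ^ a),
        if p * s - q * r = (k : ZMod (ℓ ^ a)) ∧ pr ha p + pr ha s ≠ (k : ZMod ℓ) + 1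
          then 1 else 0)
      = if pr ha q * pr ha r ≠ ((k : ZMod ℓ) + 1) * pr ha p - pr ha p * pr ha p - (k : ZMod ℓ)
          then 1 else 0 := by
    intro q r
    simp only [hiff q r, ite_and]
    rw [Finset.sum_ite_eq' univ ((↑u⁻¹ : ZMod (ℓ ^ a)) * ((k : ZMod (ℓ ^ a)) + q * r))
      (fun s => if pr ha p + pr ha s ≠ (k : ZMod ℓ) + 1 then 1 else 0), if_pos (mem_univ _)]
    congr 1
    rw [map_mul, map_add, map_mul, map_intCast]
    rw [eq_iff_iff, not_iff_not]
    exact key _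
  rw [Finset.sum_congr rfl (fun q _ => Finset.sum_congr rfl (fun r _ => step1 q r))]
  have hpair : (∑ q : ZMod (ℓ ^ a), ∑ r : ZMod (ℓ ^ a),
      if pr ha q * pr ha r ≠ ((k : ZMod ℓ) + 1) * pr ha p - pr ha p * pr ha p - (k : ZMod ℓ)
        then 1 else 0)
      = (univ.filter fun v : ZMod (ℓ ^ a) × ZMod (ℓ ^ a) =>
          (fun w : ZMod ℓ × ZMod ℓ =>
            w.1 * w.2 ≠ ((k : ZMod ℓ) + 1) * pr ha p - pr ha p * pr ha p - (k : ZMod ℓ))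
          (pr ha v.1, pr ha v.2)).card := by
    rw [Finset.card_filter, Fintype.sum_prod_type]
  rw [hpair, card_pair_pr hℓ ha (fun w : ZMod ℓ × ZMod ℓ =>
    w.1 * w.2 ≠ ((k : ZMod ℓ) + 1) * pr ha p - pr ha p * pr ha p - (k : ZMod ℓ))]


lemma main_count (hℓ : ℓ.Prime) (ha : 1 ≤ a) [NeZero ℓ] [NeZero (ℓ ^ a)] (k : ℤ)
    (hkF : (k : ZMod ℓ) ≠ 0) :
    (univ.filter fun v : ZMod (ℓ ^ a) × ZMod (ℓ ^ a) × ZMod (ℓ ^ a) × ZMod (ℓ ^ a) =>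
        v.1 * v.2.2.2 - v.2.1 * v.2.2.1 = (k : ZMod (ℓ ^ a)) ∧
        pr ha v.1 + pr ha v.2.2.2 ≠ (k : ZMod ℓ) + 1).card =
      if (k : ZMod ℓ) = 1 then ℓ ^ (3 * (a - 1)) * (ℓ ^ 3 - ℓ ^ 2 - ℓ)
      else ℓ ^ (3 * (a - 1)) * (ℓ ^ 3 - ℓ ^ 2 - 2 * ℓ) := by
  haveI : Fact ℓ.Prime := ⟨hℓ⟩
  have hL2 : 2 ≤ ℓ := hℓ.two_le
  -- Step 1: iterated sums
  have h0 : (univ.filter fun v : ZMod (ℓ ^ a) × ZMod (ℓ ^ a) × ZMod (ℓ ^ a) × ZMod (ℓ ^ a) =>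
        v.1 * v.2.2.2 - v.2.1 * v.2.2.1 = (k : ZMod (ℓ ^ a)) ∧
        pr ha v.1 + pr ha v.2.2.2 ≠ (k : ZMod ℓ) + 1).card
      = ∑ p : ZMod (ℓ ^ a), ∑ q : ZMod (ℓ ^ a), ∑ r : ZMod (ℓ ^ a), ∑ s : ZMod (ℓ ^ a),
        (if p * s - q * r = (k : ZMod (ℓ ^ a)) ∧ pr ha p + pr ha s ≠ (k : ZMod ℓ) + 1
          then 1 else 0) := by
    rw [Finset.card_filter]
    simp only [Fintype.sum_prod_type]
  rw [h0]
  -- Step 2: per-p value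
  set G : ZMod ℓ → ℕ := fun x => if x = 0
    then (ℓ ^ (a - 1) * (ℓ - 1)) * (ℓ ^ (a - 1) * (ℓ - 1))
    else ℓ ^ (a - 1) * ℓ ^ (a - 1) * (univ.filter fun w : ZMod ℓ × ZMod ℓ =>
        w.1 * w.2 ≠ ((k : ZMod ℓ) + 1) * x - x * x - (k : ZMod ℓ)).card with hG
  have h1 : ∀ p : ZMod (ℓ ^ a), (∑ q : ZMod (ℓ ^ a), ∑ r : ZMod (ℓ ^ a), ∑ s : ZMod (ℓ ^ a),
      (if p * s - q * r = (k : ZMod (ℓ ^ a)) ∧ pr ha p + pr ha s ≠ (k : ZMod ℓ) + 1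
        then 1 else 0)) = G (pr ha p) := by
    intro p
    by_cases hp : pr ha p = 0
    · rw [inner_nonunit hℓ ha k hkF p hp, hG, hp]
      simp
    · rw [inner_unit hℓ ha k p hp, hG]
      simp only [if_neg hp]
  rw [Finset.sum_congr rfl (fun p _ => h1 p)]
  -- Step 3: fiberwise
  have h2 : ∑ p : ZMod (ℓ ^ a), G (pr ha p) = ∑ x : ZMod ℓ, ℓ ^ (a - 1) * G x := by
    rw [← Finset.sum_fiberwise_of_maps_to (g := pr ha) (fun p _ => mem_univ (pr ha p))
      (f := fun p => G (pr ha p))]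
    refine Finset.sum_congr rfl (fun x _ => ?_)
    rw [Finset.sum_congr rfl (fun p hp => by
        rw [(Finset.mem_filter.mp hp).2] : ∀ p ∈ univ.filter fun p => pr ha p = x,
          G (pr ha p) = G x),
      Finset.sum_const, card_fiber hℓ ha, smul_eq_mul]
  rw [h2, ← Finset.mul_sum, ← Finset.add_sum_erase univ G (mem_univ (0 : ZMod ℓ))]
  -- Step 4: evaluate the sum over nonzero x
  have hG0 : G 0 = (ℓ ^ (a - 1) * (ℓ - 1)) * (ℓ ^ (a - 1) * (ℓ - 1)) := by
    rw [hG]; simp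
  have hm1 : ∀ c : ZMod ℓ, c ≠ 0 →
      (univ.filter fun w : ZMod ℓ × ZMod ℓ => w.1 * w.2 ≠ c).card = ℓ * ℓ - (ℓ - 1) := by
    intro c hc
    have hh := Finset.card_filter_add_card_filter_not
      (s := (univ : Finset (ZMod ℓ × ZMod ℓ))) (p := fun w => w.1 * w.2 = c)
    rw [card_F_mul_ne hℓ hc, Finset.card_univ, Fintype.card_prod, ZMod.card] at hh
    simp only [ne_eq]
    omega
  have hm0 : (univ.filter fun w : ZMod ℓ × ZMod ℓ => w.1 * w.2 ≠ (0 : ZMod ℓ)).card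
      = ℓ * ℓ - (2 * ℓ - 1) := by
    have hh := Finset.card_filter_add_card_filter_not
      (s := (univ : Finset (ZMod ℓ × ZMod ℓ))) (p := fun w => w.1 * w.2 = (0 : ZMod ℓ))
    have h2 := card_F_mul_zero (ℓ := ℓ) hℓ
    rw [Finset.card_univ, Fintype.card_prod, ZMod.card] at hh
    simp only [ne_eq]
    omega
  set P : ZMod ℓ → Prop := fun x => x = 1 ∨ x = (k : ZMod ℓ) with hP
  have hsplit := Finset.sum_filter_add_sum_filter_not ((univ : Finset (ZMod ℓ)).erase 0) P G
  rw [← hsplit]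
  have hczero : ∀ x : ZMod ℓ, P x →
      ((k : ZMod ℓ) + 1) * x - x * x - (k : ZMod ℓ) = 0 := by
    rintro x (rfl | rfl) <;> ring
  have hcne : ∀ x : ZMod ℓ, ¬ P x →
      ((k : ZMod ℓ) + 1) * x - x * x - (k : ZMod ℓ) ≠ 0 := by
    intro x hx h
    have : -((x - 1) * (x - (k : ZMod ℓ))) = 0 := by linear_combination h
    rw [neg_eq_zero, mul_eq_zero, sub_eq_zero, sub_eq_zero] at this
    exact hx this
  have hGP : ∀ x ∈ ((univ : Finset (ZMod ℓ)).erase 0).filter P,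
      G x = ℓ ^ (a - 1) * ℓ ^ (a - 1) * (ℓ * ℓ - (2 * ℓ - 1)) := by
    intro x hx
    obtain ⟨hx1, hx2⟩ := Finset.mem_filter.mp hx
    have hx0 : x ≠ 0 := (Finset.mem_erase.mp hx1).1
    rw [hG]
    simp only [if_neg hx0]
    rw [hczero x hx2, hm0]
  have hGnP : ∀ x ∈ ((univ : Finset (ZMod ℓ)).erase 0).filter (fun x => ¬ P x),
      G x = ℓ ^ (a - 1) * ℓ ^ (a - 1) * (ℓ * ℓ - (ℓ - 1)) := by
    intro x hx
    obtain ⟨hx1, hx2⟩ := Finset.mem_filter.mp hx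
    have hx0 : x ≠ 0 := (Finset.mem_erase.mp hx1).1
    rw [hG]
    simp only [if_neg hx0]
    rw [hm1 _ (hcne x hx2)]
  rw [Finset.sum_congr rfl hGP, Finset.sum_congr rfl hGnP, Finset.sum_const, Finset.sum_const,
    smul_eq_mul, smul_eq_mul]
  -- cardinalities of the two parts
  have hcards := Finset.card_filter_add_card_filter_not
    (s := (univ : Finset (ZMod ℓ)).erase 0) (p := P)
  rw [Finset.card_erase_of_mem (mem_univ _), Finset.card_univ, ZMod.card] at hcards
  set z := (((univ : Finset (ZMod ℓ)).erase 0).filter P).card with hz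
  set w := (((univ : Finset (ZMod ℓ)).erase 0).filter (fun x => ¬ P x)).card with hw
  have hA3 : ℓ ^ (3 * (a - 1)) = ℓ ^ (a - 1) * ℓ ^ (a - 1) * ℓ ^ (a - 1) := by
    rw [mul_comm 3 (a - 1), pow_mul]; ring
  by_cases hk1 : (k : ZMod ℓ) = 1
  · rw [if_pos hk1]
    have hzval : z = 1 := by
      rw [hz]
      have : ((univ : Finset (ZMod ℓ)).erase 0).filter P = {1} := by
        ext x
        simp only [Finset.mem_filter, Finset.mem_erase, mem_univ, true_and,
          Finset.mem_singleton, hP, hk1, or_self, and_true]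
        constructor
        · rintro ⟨_, h⟩; exact h
        · rintro rfl; exact ⟨one_ne_zero, rfl⟩
      rw [this, Finset.card_singleton]
    have hwval : w = ℓ - 2 := by omega
    rw [hG0, hzval, hwval, hA3]
    have key1 : 2 * ℓ ≤ ℓ * ℓ := Nat.mul_le_mul_right ℓ hL2
    have key2 : ℓ ≤ ℓ * ℓ := Nat.le_mul_of_pos_left ℓ (by omega)
    have key3 : 2 * (ℓ * ℓ) ≤ ℓ * (ℓ * ℓ) := Nat.mul_le_mul_right (ℓ * ℓ) hL2
    have e2 : ℓ ^ 2 = ℓ * ℓ := by ring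
    have e3 : ℓ ^ 3 = ℓ * (ℓ * ℓ) := by ring
    have i1 : 1 ≤ ℓ := by omega
    have i2 : 2 * ℓ - 1 ≤ ℓ * ℓ := by omega
    have i3 : ℓ - 1 ≤ ℓ * ℓ := by omega
    have i4 : 1 ≤ 2 * ℓ := by omega
    have i5 : 2 ≤ ℓ := hL2
    have i6 : ℓ ^ 2 ≤ ℓ ^ 3 := by omega
    have i7 : ℓ ≤ ℓ ^ 3 - ℓ ^ 2 := by omega
    zify [i1, i2, i3, i4, i5, i6, i7]
    ring
  · rw [if_neg hk1]
    have hL3 : 3 ≤ ℓ := by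
      have h01 : (0 : ZMod ℓ) ≠ 1 := zero_ne_one
      have h3 : ({0, 1, (k : ZMod ℓ)} : Finset (ZMod ℓ)).card = 3 := by
        rw [Finset.card_insert_of_notMem (by
            simp only [Finset.mem_insert, Finset.mem_singleton]
            push_neg
            exact ⟨h01, fun h => hkF h.symm⟩),
          Finset.card_insert_of_notMem (by
            simp only [Finset.mem_singleton]
            exact fun h => hk1 h.symm),
          Finset.card_singleton]
      calc 3 = ({0, 1, (k : ZMod ℓ)} : Finset (ZMod ℓ)).card := h3.symm
      _ ≤ (univ : Finset (ZMod ℓ)).card := Finset.card_le_card (Finset.subset_univ _)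
      _ = ℓ := by rw [Finset.card_univ, ZMod.card]
    have hzval : z = 2 := by
      rw [hz]
      have : ((univ : Finset (ZMod ℓ)).erase 0).filter P = {1, (k : ZMod ℓ)} := by
        ext x
        simp only [Finset.mem_filter, Finset.mem_erase, mem_univ, true_and,
          Finset.mem_insert, Finset.mem_singleton, hP, and_true]
        constructor
        · rintro ⟨_, h⟩; exact h
        · intro h
          refine ⟨?_, h⟩
          rcases h with rfl | rfl
          · exact one_ne_zero
          · exact hkF
      rw [this, Finset.card_pair (fun h => hk1 h.symm)]
    have hwval : w = ℓ - 3 := by omega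
    rw [hG0, hzval, hwval, hA3]
    have key1 : 2 * ℓ ≤ ℓ * ℓ := Nat.mul_le_mul_right ℓ hL2
    have key2 : ℓ ≤ ℓ * ℓ := Nat.le_mul_of_pos_left ℓ (by omega)
    have key3 : 3 * (ℓ * ℓ) ≤ ℓ * (ℓ * ℓ) := Nat.mul_le_mul_right (ℓ * ℓ) hL3
    have e2 : ℓ ^ 2 = ℓ * ℓ := by ring
    have e3 : ℓ ^ 3 = ℓ * (ℓ * ℓ) := by ring
    have i1 : 1 ≤ ℓ := by omega
    have i2 : 2 * ℓ - 1 ≤ ℓ * ℓ := by omega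
    have i3 : ℓ - 1 ≤ ℓ * ℓ := by omega
    have i4 : 1 ≤ 2 * ℓ := by omega
    have i5 : 3 ≤ ℓ := hL3
    have i6 : ℓ ^ 2 ≤ ℓ ^ 3 := by omega
    have i7 : 2 * ℓ ≤ ℓ ^ 3 - ℓ ^ 2 := by omega
    zify [i1, i2, i3, i4, i5, i6, i7]
    ring

end Stmt4Aux

open Stmt4Aux Finset in
/-- Count of `M ∈ GL₂(ℤ/ℓᵃℤ)` with `det(M − I) ≢ 0 (mod ℓ)` and `det M ≡ k (mod ℓᵃ)`. -/
theorem stmt4 (ℓ : ℕ) (hℓ : ℓ.Prime) (a : ℕ) (ha : 1 ≤ a) (k : ℤ)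
    (hk : IsCoprime k (ℓ : ℤ)) :
    Nat.card {M : GL (Fin 2) (ZMod (ℓ ^ a)) //
      ((Matrix.GeneralLinearGroup.map
          (ZMod.castHom (dvd_pow_self ℓ (Nat.one_le_iff_ne_zero.mp ha)) (ZMod ℓ)) M :
            Matrix (Fin 2) (Fin 2) (ZMod ℓ)) - 1).det ≠ 0 ∧
      (M : Matrix (Fin 2) (Fin 2) (ZMod (ℓ ^ a))).det = (k : ZMod (ℓ ^ a))} =
      if (k : ZMod ℓ) = 1 then ℓ ^ (3 * (a - 1)) * (ℓ ^ 3 - ℓ ^ 2 - ℓ)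
      else ℓ ^ (3 * (a - 1)) * (ℓ ^ 3 - ℓ ^ 2 - 2 * ℓ) := by
  haveI : NeZero ℓ := ⟨hℓ.pos.ne'⟩
  haveI : NeZero (ℓ ^ a) := ⟨pow_ne_zero _ hℓ.pos.ne'⟩
  haveI : Fact ℓ.Prime := ⟨hℓ⟩
  -- (k : ZMod ℓ) is nonzero
  have hkF0 : (k : ZMod ℓ) ≠ 0 := by
    have h2 := hk.map (Int.castRingHom (ZMod ℓ))
    rw [map_natCast (Int.castRingHom (ZMod ℓ)), ZMod.natCast_self] at h2
    exact (isCoprime_zero_right.mp h2).ne_zero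
  -- (k : ZMod (ℓ^a)) is a unit
  have hkR : IsUnit ((k : ZMod (ℓ ^ a))) := by
    refine (isUnit_iff_pr hℓ ha _).mpr ?_
    rw [map_intCast]
    exact hkF0
  -- the matrix-level condition iff
  have main_iff : ∀ N : Matrix (Fin 2) (Fin 2) (ZMod (ℓ ^ a)),
      N.det = (k : ZMod (ℓ ^ a)) →
      (((N.map (pr ha)) - 1).det ≠ 0 ↔
        pr ha (N 0 0) + pr ha (N 1 1) ≠ (k : ZMod ℓ) + 1) := by
    intro N h2
    have hπdet : pr ha (N 0 0) * pr ha (N 1 1) - pr ha (N 0 1) * pr ha (N 1 0)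
        = (k : ZMod ℓ) := by
      have h3 := congrArg (pr ha) h2
      rw [Matrix.det_fin_two] at h3
      simpa only [map_sub, map_mul, map_intCast] using h3
    have hdet2 : ((N.map (pr ha)) - 1).det
        = ((k : ZMod ℓ) + 1) - (pr ha (N 0 0) + pr ha (N 1 1)) := by
      rw [Matrix.det_fin_two]
      simp only [Matrix.sub_apply, Matrix.map_apply, Matrix.one_apply_eq,
        Matrix.one_apply_ne (by decide : (0 : Fin 2) ≠ 1),
        Matrix.one_apply_ne (by decide : (1 : Fin 2) ≠ 0), sub_zero]
      linear_combination hπdet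
    rw [hdet2, sub_ne_zero]
    exact ne_comm
  -- the bijection to 4-tuples
  set cond2 : ZMod (ℓ ^ a) × ZMod (ℓ ^ a) × ZMod (ℓ ^ a) × ZMod (ℓ ^ a) → Prop :=
    fun v => v.1 * v.2.2.2 - v.2.1 * v.2.2.1 = (k : ZMod (ℓ ^ a)) ∧
      pr ha v.1 + pr ha v.2.2.2 ≠ (k : ZMod ℓ) + 1 with hcond2
  have hcongr : Nat.card {M : GL (Fin 2) (ZMod (ℓ ^ a)) //
      ((Matrix.GeneralLinearGroup.map
          (ZMod.castHom (dvd_pow_self ℓ (Nat.one_le_iff_ne_zero.mp ha)) (ZMod ℓ)) M :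
            Matrix (Fin 2) (Fin 2) (ZMod ℓ)) - 1).det ≠ 0 ∧
      (M : Matrix (Fin 2) (Fin 2) (ZMod (ℓ ^ a))).det = (k : ZMod (ℓ ^ a))}
      = Nat.card {v : ZMod (ℓ ^ a) × ZMod (ℓ ^ a) × ZMod (ℓ ^ a) × ZMod (ℓ ^ a) // cond2 v} := by
    apply Nat.card_congr
    have hGLcoe : ∀ M : GL (Fin 2) (ZMod (ℓ ^ a)),
        ((Matrix.GeneralLinearGroup.map
          (ZMod.castHom (dvd_pow_self ℓ (Nat.one_le_iff_ne_zero.mp ha)) (ZMod ℓ)) M :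
            Matrix (Fin 2) (Fin 2) (ZMod ℓ)))
          = (M : Matrix (Fin 2) (Fin 2) (ZMod (ℓ ^ a))).map (pr ha) := fun M => rfl
    refine Equiv.ofBijective (fun M => ⟨((M.1 : Matrix (Fin 2) (Fin 2) (ZMod (ℓ ^ a))) 0 0,
        (M.1 : Matrix (Fin 2) (Fin 2) (ZMod (ℓ ^ a))) 0 1,
        (M.1 : Matrix (Fin 2) (Fin 2) (ZMod (ℓ ^ a))) 1 0,
        (M.1 : Matrix (Fin 2) (Fin 2) (ZMod (ℓ ^ a))) 1 1), ?_⟩) ⟨?_, ?_⟩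
    · obtain ⟨h1, h2⟩ := M.2
      rw [hGLcoe] at h1
      have hd : (M.1 : Matrix (Fin 2) (Fin 2) (ZMod (ℓ ^ a))).det = (k : ZMod (ℓ ^ a)) := h2
      rw [hcond2]
      constructor
      · rw [← Matrix.det_fin_two]; exact hd
      · exact (main_iff _ hd).mp h1
    · rintro ⟨M, hM⟩ ⟨M', hM'⟩ h
      simp only [Subtype.mk.injEq, Prod.mk.injEq] at h
      obtain ⟨e1, e2, e3, e4⟩ := h
      apply Subtype.ext
      apply Units.ext
      ext i j
      fin_cases i <;> fin_cases j <;> assumption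
    · rintro ⟨v, hv⟩
      obtain ⟨hv1, hv2⟩ := hv
      set N : Matrix (Fin 2) (Fin 2) (ZMod (ℓ ^ a)) :=
        !![v.1, v.2.1; v.2.2.1, v.2.2.2] with hN
      have hNdet : N.det = (k : ZMod (ℓ ^ a)) := by
        rw [hN, Matrix.det_fin_two_of]
        exact hv1
      have hNu : IsUnit N := (Matrix.isUnit_iff_isUnit_det N).mpr (hNdet ▸ hkR)
      have hNspec : (hNu.unit : Matrix (Fin 2) (Fin 2) (ZMod (ℓ ^ a))) = N := hNu.unit_spec
      have hent : N 0 0 = v.1 ∧ N 0 1 = v.2.1 ∧ N 1 0 = v.2.2.1 ∧ N 1 1 = v.2.2.2 := by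
        refine ⟨?_, ?_, ?_, ?_⟩ <;> simp [hN]
      refine ⟨⟨hNu.unit, ?_⟩, ?_⟩
      · constructor
        · rw [hGLcoe, hNspec]
          refine (main_iff N hNdet).mpr ?_
          rw [hent.1, hent.2.2.2]
          exact hv2
        · rw [hNspec]
          exact hNdet
      · apply Subtype.ext
        simp only
        rw [hNspec, hent.1, hent.2.1, hent.2.2.1, hent.2.2.2]
  rw [hcongr, Nat.card_eq_fintype_card, Fintype.card_subtype]
  exact main_count hℓ ha k hkF0
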